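/- arXiv:1405.2879 — 2 statements merged into one kernel-verified Lean document; each statement's English description precedes it below -/
import Mathlib

section
/- Let X be a finite nonempty set. Let C be a symmetric X-by-X matrix with nonnegative real entries and zero diagonal, let κ : X → ℝ be nonnegative, and set \(\lambda_x = \sum_y C_{x,y} + \kappa_x\). Assume \(A = \mathrm{diag}(\lambda) - C\) is positive definite. Then for every X-by-X Hermitian matrix Z with \(|Z_{x,y}| \le 1\) for all x, y, the Hermitian matrix \(A^{Z}\) with entries \(A^{Z}_{x,y} = \lambda_x \delta_{x,y} - C_{x,y} Z_{x,y}\) is positive definite. -/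
open scoped BigOperators ComplexOrder
open Matrix

/-- If the energy matrix `A = diag(λ) - C` (with `C` symmetric,
nonnegative, zero-diagonal, `κ ≥ 0`, `λ_x = ∑_y C_{x,y} + κ_x`) is positive
definite, then for every Hermitian matrix `Z` with all entries of modulus at most `1`,
the twisted energy matrix `A^Z` with entries `A^Z_{x,y} = λ_x δ_{x,y} - C_{x,y} Z_{x,y}`
is positive definite. -/
theorem twisted_energy_posDef
    {X : Type*} [Fintype X] [DecidableEq X] [Nonempty X]
    (C : Matrix X X ℝ) (κ : X → ℝ) (lam : X → ℝ)
    (hlam : ∀ x, lam x = ∑ y, C x y + κ x)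
    (hC0 : ∀ x y, 0 ≤ C x y) (hCsym : ∀ x y, C x y = C y x)
    (hCdiag : ∀ x, C x x = 0) (hκ : ∀ x, 0 ≤ κ x)
    (A : Matrix X X ℝ) (hA : A = Matrix.diagonal lam - C) (hApd : A.PosDef)
    (Z : Matrix X X ℂ) (hZherm : Z.IsHermitian)
    (hZle : ∀ x y, ‖Z x y‖ ≤ 1)
    (AZ : Matrix X X ℂ)
    (hAZ : ∀ x y, AZ x y = (if x = y then (lam x : ℂ) else 0) - (C x y : ℂ) * Z x y) :
    AZ.PosDef := by
  have hAZherm : AZ.IsHermitian := by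
    ext x y
    simp only [Matrix.conjTranspose_apply, hAZ, star_sub, star_mul', hZherm.apply x y]
    rw [apply_ite (star : ℂ → ℂ)]
    simp only [star_zero, Complex.star_def, Complex.conj_ofReal]
    by_cases h : x = y
    · subst h; simp
    · rw [if_neg (fun hh => h hh.symm), if_neg h, hCsym x y]
  refine Matrix.PosDef.of_dotProduct_mulVec_pos hAZherm (fun v hv => ?_)
  set z := dotProduct (star v) (AZ *ᵥ v) with hz
  -- z is self-conjugate
  have hzstar : star z = z := by
    rw [hz]
    conv_lhs => rw [star_dotProduct, star_star, Matrix.star_mulVec, hAZherm.eq,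
      ← Matrix.dotProduct_mulVec]
  have him : z.im = 0 := by
    have := congrArg Complex.im hzstar
    simp only [Complex.star_def, Complex.conj_im] at this
    linarith
  -- real part estimate
  set g : X → ℝ := fun x => ‖v x‖ with hg
  have hgne : g ≠ 0 := by
    intro h
    apply hv
    funext x
    have : ‖v x‖ = 0 := congrFun h x
    exact norm_eq_zero.mp this
  have hQ : 0 < dotProduct (star g) (A *ᵥ g) := hApd.dotProduct_mulVec_pos hgne
  have hstarg : star g = g := by funext x; simp
  rw [hstarg] at hQ
  -- expand z.re as a double sum
  have hzre : z.re = ∑ x, ∑ y, ((starRingEnd ℂ) (v x) * (AZ x y * v y)).re := by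
    rw [hz]
    simp only [dotProduct, Matrix.mulVec, Pi.star_apply, Complex.star_def,
      Finset.mul_sum, Complex.re_sum]
  have hQexp : dotProduct g (A *ᵥ g) = ∑ x, ∑ y, g x * (A x y * g y) := by
    simp only [dotProduct, Matrix.mulVec, Finset.mul_sum]
  have hterm : ∀ x y, g x * (A x y * g y) ≤ ((starRingEnd ℂ) (v x) * (AZ x y * v y)).re := by
    intro x y
    rw [hAZ, hA]
    by_cases h : x = y
    · subst h
      simp only [eq_self_iff_true, if_true, Matrix.sub_apply, Matrix.diagonal_apply_eq,
        hCdiag, Complex.ofReal_zero, zero_mul, sub_zero, sub_zero]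
      have h1 : (starRingEnd ℂ) (v x) * ((lam x : ℂ) * v x)
          = (lam x : ℂ) * ((starRingEnd ℂ) (v x) * v x) := by ring
      have h2 : (starRingEnd ℂ) (v x) * v x = (Complex.normSq (v x) : ℂ) := by
        rw [mul_comm, Complex.mul_conj]
      rw [h1, h2, ← Complex.ofReal_mul, Complex.ofReal_re, Complex.normSq_eq_norm_sq]
      have : g x * (lam x * g x) = lam x * ‖v x‖ ^ 2 := by rw [hg]; ring
      rw [this]
    · simp only [if_neg h, Matrix.sub_apply, Matrix.diagonal_apply_ne _ h, zero_sub, zero_mul]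
      -- LHS: g x * (-C x y * g y); RHS: re (conj vx * (-(C * Z) * vy))
      have hre : ((starRingEnd ℂ) (v x) * (-((C x y : ℂ) * Z x y) * v y)).re
          = -(C x y * ((starRingEnd ℂ) (v x) * Z x y * v y).re) := by
        have : (starRingEnd ℂ) (v x) * (-((C x y : ℂ) * Z x y) * v y)
            = -((C x y : ℂ) * ((starRingEnd ℂ) (v x) * Z x y * v y)) := by ring
        rw [this, Complex.neg_re, Complex.re_ofReal_mul]
      rw [hre]
      have habs : ((starRingEnd ℂ) (v x) * Z x y * v y).re ≤ g x * g y := by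
        calc ((starRingEnd ℂ) (v x) * Z x y * v y).re
            ≤ ‖(starRingEnd ℂ) (v x) * Z x y * v y‖ := Complex.re_le_norm _
          _ = ‖v x‖ * ‖Z x y‖ * ‖v y‖ := by
              rw [norm_mul, norm_mul, Complex.norm_conj]
          _ ≤ ‖v x‖ * 1 * ‖v y‖ := by
              apply mul_le_mul_of_nonneg_right _ (norm_nonneg _)
              exact mul_le_mul_of_nonneg_left (hZle x y) (norm_nonneg _)
          _ = g x * g y := by rw [hg]; ring
      have := mul_le_mul_of_nonneg_left habs (hC0 x y)
      have hle : g x * (-C x y * g y) ≤ -(C x y * ((starRingEnd ℂ) (v x) * Z x y * v y).re) := by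
        nlinarith
      exact hle
  have hrege : dotProduct g (A *ᵥ g) ≤ z.re := by
    rw [hzre, hQexp]
    exact Finset.sum_le_sum fun x _ => Finset.sum_le_sum fun y _ => hterm x y
  have hrepos : 0 < z.re := lt_of_lt_of_le hQ hrege
  rw [show (0 : ℂ) < z ↔ (0:ℂ).re < z.re ∧ (0:ℂ).im = z.im from Complex.lt_def]
  exact ⟨by simpa using hrepos, by simp [him]⟩
end

section
/- Let X and E be finite nonempty sets with |X| = m ≥ 2 and |E| = N, and let s, t : E → X with s(e) ≠ t(e) for every e (an oriented graph). Let B be the X-by-E incidence matrix over ℝ, \(B_{x,e} = \mathbf{1}[x = t(e)] - \mathbf{1}[x = s(e)]\), and assume B has rank m − 1 (the graph is connected), so that N − m + 1 ≥ 0; set r = N − m + 1. Let C : E → ℝ with \(C_e > 0\) for all e, and let \(L = B\, \mathrm{diag}(C)\, B^{T}\) be the weighted Laplacian. Fix \(x_0 \in X\) and let \(\hat L\) be the (m−1)-by-(m−1) matrix obtained from L by deleting the row and the column indexed by \(x_0\). Let D be an E-by-r real matrix with integer entries whose columns form a ℤ-basis of the abelian group \(\{ f \in \mathbb{Z}^{E}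 : B f = 0 \}\). Then \(\det\big( D^{T}\, \mathrm{diag}(C)^{-1}\, D \big) \cdot \prod_{e \in E} C_e \; = \; \det \hat L.\) -/
open scoped BigOperators Matrix

private lemma aux_submatrix_mul {α β γ δ : Type*} [Fintype β] [Fintype γ]
    (M : Matrix α β ℝ) (N : Matrix β γ ℝ) (f : δ → α) :
    M.submatrix f id * N = (M * N).submatrix f id := by
  ext i j; simp [Matrix.mul_apply]

private lemma aux_mul_submatrix {α β γ δ : Type*} [Fintype β] [Fintype γ]
    (M : Matrix α β ℝ) (N : Matrix β γ ℝ) (g : δ → γ) :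
    M * N.submatrix id g = (M * N).submatrix id g := by
  ext i j; simp [Matrix.mul_apply]

private lemma aux_jacobi {n₁ n₂ : Type*} [Fintype n₁] [Fintype n₂] [DecidableEq n₁] [DecidableEq n₂]
    (N H : Matrix (n₁ ⊕ n₂) (n₁ ⊕ n₂) ℝ) (h : N * H = 1) :
    (H.toBlocks₁₁).det * N.det = (N.toBlocks₂₂).det := by
  have hN := Matrix.fromBlocks_toBlocks N
  have hH := Matrix.fromBlocks_toBlocks H
  have hprod : Matrix.fromBlocks N.toBlocks₁₁ N.toBlocks₁₂ N.toBlocks₂₁ N.toBlocks₂₂ *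
      Matrix.fromBlocks H.toBlocks₁₁ H.toBlocks₁₂ H.toBlocks₂₁ H.toBlocks₂₂ =
      Matrix.fromBlocks 1 0 0 1 := by rw [hN, hH, h]; exact Matrix.fromBlocks_one.symm
  rw [Matrix.fromBlocks_multiply] at hprod
  have e11 : N.toBlocks₁₁ * H.toBlocks₁₁ + N.toBlocks₁₂ * H.toBlocks₂₁ = 1 := by
    have := congrArg Matrix.toBlocks₁₁ hprod
    rw [Matrix.toBlocks_fromBlocks₁₁, Matrix.toBlocks_fromBlocks₁₁] at this
    exact this
  have e21 : N.toBlocks₂₁ * H.toBlocks₁₁ + N.toBlocks₂₂ * H.toBlocks₂₁ = 0 := by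
    have := congrArg Matrix.toBlocks₂₁ hprod
    rw [Matrix.toBlocks_fromBlocks₂₁, Matrix.toBlocks_fromBlocks₂₁] at this
    exact this
  have key : N * Matrix.fromBlocks H.toBlocks₁₁ 0 H.toBlocks₂₁ 1 =
      Matrix.fromBlocks 1 N.toBlocks₁₂ 0 N.toBlocks₂₂ := by
    conv_lhs => rw [← hN]
    rw [Matrix.fromBlocks_multiply]
    rw [e11, e21]
    congr 1 <;> simp
  have hdet := congrArg Matrix.det key
  rw [Matrix.det_mul, Matrix.det_fromBlocks_zero₁₂, Matrix.det_fromBlocks_zero₂₁] at hdet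
  simp only [Matrix.det_one, one_mul, mul_one] at hdet
  linarith [hdet]

/-- For a connected weighted oriented graph with vertex set `X`
(`|X| = m ≥ 2`), edge set `E` (`|E| = N`), incidence matrix `B` of rank `m - 1`,
positive conductances `C`, weighted Laplacian `L = B diag(C) Bᵀ`, and an integer
matrix `D` whose columns form a `ℤ`-basis of the lattice `{f ∈ ℤ^E : Bf = 0}` (of
rank `r = N - m + 1`), one has
`det(Dᵀ diag(C)⁻¹ D) · ∏ₑ Cₑ = det L̂`, where `L̂` is `L` with the row and column of
a fixed vertex `x₀` removed. -/
theorem jacobian_torus_volume_identity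
    {X E : Type*} [Fintype X] [DecidableEq X] [Nonempty X]
    [Fintype E] [DecidableEq E] [Nonempty E]
    (hm : 2 ≤ Fintype.card X)
    (s t : E → X) (hst : ∀ e, s e ≠ t e)
    (B : Matrix X E ℝ)
    (hB : ∀ x e, B x e = (if x = t e then (1 : ℝ) else 0) - (if x = s e then 1 else 0))
    (hrank : B.rank = Fintype.card X - 1)
    (C : E → ℝ) (hC : ∀ e, 0 < C e)
    (L : Matrix X X ℝ) (hL : L = B * Matrix.diagonal C * B.transpose)
    (x0 : X)
    (r : ℕ) (hr : r = Fintype.card E + 1 - Fintype.card X)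
    (D : Matrix E (Fin r) ℤ)
    (hker : ∀ i, (B *ᵥ fun e => ((D e i : ℤ) : ℝ)) = 0)
    (hbasis : ∀ f : E → ℤ, (B *ᵥ fun e => ((f e : ℤ) : ℝ)) = 0 →
      ∃! c : Fin r → ℤ, ∀ e, f e = ∑ i, D e i * c i) :
    ((D.map (fun n : ℤ => (n : ℝ))).transpose * Matrix.diagonal (fun e => (C e)⁻¹) *
        D.map (fun n : ℤ => (n : ℝ))).det * ∏ e, C e
      = (L.submatrix (fun i : {x : X // x ≠ x0} => (i : X))
          (fun j : {x : X // x ≠ x0} => (j : X))).det := by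
  classical
  set Bz : Matrix X E ℤ :=
    Matrix.of (fun x e => ((if x = t e then (1:ℤ) else 0) - (if x = s e then 1 else 0))) with hBzdef
  have hreach : ∀ x : X, ∃ f : E → ℤ,
      Bz *ᵥ f = fun y => (if y = x then 1 else 0) - (if y = x0 then 1 else 0) := by
    classical
    set T : X → X → Prop := fun a b => ∃ f : E → ℤ,
      Bz *ᵥ f = fun y => (if y = a then 1 else 0) - (if y = b then 1 else 0) with hT
    have hTrefl : ∀ a, T a a := by
      intro a; exact ⟨0, by ext y; simp [Matrix.mulVec, dotProduct]⟩
    have hTsymm : ∀ a b, T a b → T b a := by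
      rintro a b ⟨f, hf⟩
      refine ⟨-f, ?_⟩
      rw [Matrix.mulVec_neg, hf]
      ext y; simp
    have hTtrans : ∀ a b c, T a b → T b c → T a c := by
      rintro a b c ⟨f, hf⟩ ⟨g, hg⟩
      refine ⟨f + g, ?_⟩
      rw [Matrix.mulVec_add, hf, hg]
      ext y; simp
    have hTedge : ∀ e, T (t e) (s e) := by
      intro e
      refine ⟨fun e' => if e' = e then 1 else 0, ?_⟩
      ext y
      simp only [Matrix.mulVec, dotProduct, mul_ite, mul_one, mul_zero,
        Finset.sum_ite_eq' Finset.univ e, Finset.mem_univ, if_true, hBzdef, Matrix.of_apply]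
    -- claim: all vertices related to x0
    intro x
    by_contra hcon
    -- not T x x0 ; build two independent kernel vectors of Bᵀ
    have hxa : ¬ T x x0 := hcon
    set u : X → ℝ := fun y => if T y x then 1 else 0 with hu
    set w : X → ℝ := fun _ => 1 with hw
    have hBu : ∀ (v : X → ℝ), (∀ e, v (t e) = v (s e)) → B.transpose *ᵥ v = 0 := by
      intro v hv
      ext e
      have : ∀ y, B.transpose e y = (if y = t e then (1:ℝ) else 0) - (if y = s e then 1 else 0) := by
        intro y; rw [Matrix.transpose_apply, hB]
      simp only [Matrix.mulVec, dotProduct, this, sub_mul, ite_mul, one_mul, zero_mul,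
        Finset.sum_sub_distrib, Finset.sum_ite_eq' Finset.univ, Finset.mem_univ, if_true,
        Pi.zero_apply]
      rw [hv e]; ring
    have hker_u : B.transpose *ᵥ u = 0 := by
      apply hBu
      intro e
      have hts : T (t e) (s e) := hTedge e
      by_cases h1 : T (t e) x
      · have h2 : T (s e) x := hTtrans _ _ _ (hTsymm _ _ hts) h1
        simp [hu, h1, h2]
      · have h2 : ¬ T (s e) x := fun h2 => h1 (hTtrans _ _ _ hts h2)
        simp [hu, h1, h2]
    have hker_w : B.transpose *ᵥ w = 0 := hBu w (fun _ => rfl)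
    -- linear independence
    have hux : u x = 1 := by simp [hu, hTrefl x]
    have hux0 : u x0 = 0 := by
      have : ¬ T x0 x := fun h => hxa (hTsymm _ _ h)
      simp [hu, this]
    have hindep : LinearIndependent ℝ ![u, w] := by
      rw [LinearIndependent.pair_iff]
      intro c₁ c₂ hc
      have h1 := congrFun hc x0
      have h2 := congrFun hc x
      simp [hux0, hw, smul_eq_mul] at h1 h2
      rw [hux] at h2
      constructor <;> linarith
    -- kernel dimension ≥ 2
    set f := B.transpose.mulVecLin with hf
    have humem : u ∈ LinearMap.ker f := by rw [LinearMap.mem_ker, hf, Matrix.mulVecLin_apply]; exact hker_u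
    have hwmem : w ∈ LinearMap.ker f := by rw [LinearMap.mem_ker, hf, Matrix.mulVecLin_apply]; exact hker_w
    set g : Fin 2 → LinearMap.ker f := ![⟨u, humem⟩, ⟨w, hwmem⟩] with hg
    have hgindep : LinearIndependent ℝ g := by
      have hcomp : (LinearMap.ker f).subtype ∘ g = ![u, w] := by
        funext i
        fin_cases i <;> rfl
      apply LinearIndependent.of_comp (LinearMap.ker f).subtype
      rw [hcomp]; exact hindep
    have hdim : 2 ≤ Module.finrank ℝ (LinearMap.ker f) := by
      have := hgindep.fintype_card_le_finrank
      simpa using this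
    have hrn := LinearMap.finrank_range_add_finrank_ker f
    have hrange : Module.finrank ℝ (LinearMap.range f) = B.transpose.rank := rfl
    have hrankT : B.transpose.rank = Fintype.card X - 1 := by rw [Matrix.rank_transpose, hrank]
    rw [hrange, hrankT, Module.finrank_pi] at hrn
    omega
  have hBcast : ∀ x e, ((Bz x e : ℤ) : ℝ) = B x e := by
    intro x e; rw [hB, hBzdef]; push_cast; simp
  -- column sums of Bz vanish
  have hcol : ∀ e, ∑ x, Bz x e = 0 := by
    intro e
    simp only [hBzdef, Matrix.of_apply, Finset.sum_sub_distrib,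
      Finset.sum_ite_eq' Finset.univ, Finset.mem_univ, if_true]
    ring
  -- the matrix R
  set R : Matrix E {x : X // x ≠ x0} ℤ := Matrix.of (fun e y => (hreach (y : X)).choose e) with hRdef
  have hBR : ∀ (x y : {x : X // x ≠ x0}), ∑ e, Bz (x : X) e * R e y = if x = y then 1 else 0 := by
    intro x y
    have h1 := congrFun (hreach (y : X)).choose_spec (x : X)
    simp only [Matrix.mulVec, dotProduct] at h1
    rw [hRdef]
    simp only [Matrix.of_apply]
    rw [h1]
    have hx0 : ((x : X) = x0) = False := by simp [x.2]
    simp only [hx0, if_false, sub_zero]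
    by_cases h : x = y
    · simp [h]
    · have hxy : ¬ (x : X) = (y : X) := fun hh => h (Subtype.ext hh)
      simp [h, hxy]
  -- Bz * D = 0 over ℤ
  have hBzD : ∀ (x : X) (i : Fin r), ∑ e, Bz x e * D e i = 0 := by
    intro x i
    have h1 := congrFun (hker i) x
    simp only [Matrix.mulVec, dotProduct, Pi.zero_apply] at h1
    have h2 : ((∑ e, Bz x e * D e i : ℤ) : ℝ) = 0 := by
      push_cast
      rw [← h1]
      congr 1; funext e; rw [hBcast]
    exact_mod_cast h2
  -- row computations
  have hrowR : ∀ (x : {x : X // x ≠ x0}) (a : {x : X // x ≠ x0} → ℤ),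
      ∑ e, Bz (x : X) e * (R *ᵥ a) e = a x := by
    intro x a
    simp only [Matrix.mulVec, dotProduct, Finset.mul_sum]
    rw [Finset.sum_comm]
    have key : ∀ y, ∑ e, Bz (x : X) e * (R e y * a y) = (if x = y then 1 else 0) * a y := by
      intro y
      have h2 : ∑ e, Bz (x : X) e * (R e y * a y) = (∑ e, Bz (x : X) e * R e y) * a y := by
        rw [Finset.sum_mul]; exact Finset.sum_congr rfl fun e _ => by ring
      rw [h2, hBR x y]
    calc ∑ y, ∑ e, Bz (x : X) e * (R e y * a y) = ∑ y, (if x = y then 1 else 0) * a y :=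
          Finset.sum_congr rfl (fun y _ => key y)
      _ = a x := by simp [Finset.sum_ite_eq Finset.univ]
  have hrowD : ∀ (x : X) (c : Fin r → ℤ), ∑ e, Bz x e * (D *ᵥ c) e = 0 := by
    intro x c
    simp only [Matrix.mulVec, dotProduct, Finset.mul_sum]
    rw [Finset.sum_comm]
    have : ∀ i, ∑ e, Bz x e * (D e i * c i) = 0 := by
      intro i
      have : ∑ e, Bz x e * (D e i * c i) = (∑ e, Bz x e * D e i) * c i := by
        rw [Finset.sum_mul]; congr 1; funext e; ring
      rw [this, hBzD x i, zero_mul]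
    simp [this]
  -- from reduced kernel to full kernel
  have hfull : ∀ g : E → ℤ, (∀ x : {x : X // x ≠ x0}, ∑ e, Bz (x : X) e * g e = 0) →
      ∀ x : X, ∑ e, Bz x e * g e = 0 := by
    intro g hg
    have h0 : ∑ e, Bz x0 e * g e = 0 := by
      have hsum : ∑ x : X, ∑ e, Bz x e * g e = ∑ e, Bz x0 e * g e := by
        apply Finset.sum_eq_single x0
        · intro y _ hy
          exact hg ⟨y, hy⟩
        · intro h; exact absurd (Finset.mem_univ x0) h
      rw [← hsum, Finset.sum_comm]
      have hz : ∀ e, ∑ x : X, Bz x e * g e = 0 := by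
        intro e
        rw [← Finset.sum_mul, hcol e, zero_mul]
      simp [hz]
    intro x
    by_cases hx : x = x0
    · rw [hx]; exact h0
    · exact hg ⟨x, hx⟩
  -- cardinalities
  have hmE : Fintype.card X - 1 ≤ Fintype.card E := hrank ▸ B.rank_le_card_width
  have hcard1 : Fintype.card {x : X // x ≠ x0} = Fintype.card X - 1 := by
    have := Fintype.card_subtype_compl (fun x : X => x = x0)
    simpa [Fintype.card_subtype_eq] using this
  have hcard : Fintype.card ({x : X // x ≠ x0} ⊕ Fin r) = Fintype.card E := by
    rw [Fintype.card_sum, hcard1, Fintype.card_fin, hr]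
    omega
  set κ : ({x : X // x ≠ x0} ⊕ Fin r) ≃ E := Fintype.equivOfCardEq hcard with hκ
  set Pz : Matrix E E ℤ :=
    Matrix.of (fun e j => Sum.elim (fun y => R e y) (fun i => D e i) (κ.symm j)) with hPz
  -- mulVec decomposition
  have hPmul : ∀ v : E → ℤ, Pz *ᵥ v =
      (R *ᵥ fun y => v (κ (Sum.inl y))) + (D *ᵥ fun i => v (κ (Sum.inr i))) := by
    intro v
    ext e
    show ∑ j, Pz e j * v j = _
    rw [← Equiv.sum_comp κ (fun j => Pz e j * v j), Fintype.sum_sum_type]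
    simp only [hPz, Matrix.of_apply, Equiv.symm_apply_apply, Sum.elim_inl, Sum.elim_inr,
      Pi.add_apply]
    rfl
  -- injectivity
  have hDzero : ∀ c : Fin r → ℤ, D *ᵥ c = 0 → c = 0 := by
    intro c hc
    have h0 : (B *ᵥ fun e => (((0 : E → ℤ) e : ℤ) : ℝ)) = 0 := by
      ext x; simp [Matrix.mulVec, dotProduct]
    obtain ⟨c', hc', huniq⟩ := hbasis 0 h0
    have h1 : c = c' := by
      apply huniq
      intro e
      have := congrFun hc e
      simp only [Matrix.mulVec, dotProduct, Pi.zero_apply] at this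
      rw [Pi.zero_apply, this]
    have h2 : (0 : Fin r → ℤ) = c' := by
      apply huniq
      intro e
      simp
    rw [h1, ← h2]
  have hinj : Function.Injective (fun v : E → ℤ => Pz *ᵥ v) := by
    intro v v' hvv
    have hzero : Pz *ᵥ (v - v') = 0 := by
      rw [Matrix.mulVec_sub]
      simp only at hvv
      rw [hvv, sub_self]
    set v'' := v - v' with hv''
    rw [hPmul] at hzero
    set a : {x : X // x ≠ x0} → ℤ := fun y => v'' (κ (Sum.inl y)) with ha
    set c : Fin r → ℤ := fun i => v'' (κ (Sum.inr i)) with hc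
    have hsplit : ∀ (x : {x : X // x ≠ x0}) (a' : {x : X // x ≠ x0} → ℤ) (c' : Fin r → ℤ),
        (R *ᵥ a') + (D *ᵥ c') = 0 → a' x = 0 := by
      intro x a' c' hz
      have h1 : ∑ e, Bz (x : X) e * (((R *ᵥ a') + (D *ᵥ c')) e) = 0 := by
        rw [hz]; simp
      have h2 : ∑ e, Bz (x : X) e * (((R *ᵥ a') + (D *ᵥ c')) e)
          = ∑ e, (Bz (x : X) e * (R *ᵥ a') e + Bz (x : X) e * (D *ᵥ c') e) :=
        Finset.sum_congr rfl (fun e _ => by simp [mul_add])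
      rw [h2, Finset.sum_add_distrib, hrowR, hrowD, add_zero] at h1
      exact h1
    have hazero : a = 0 := funext fun x => hsplit x a c hzero
    have hczero : c = 0 := by
      apply hDzero
      rw [hazero] at hzero
      simpa using hzero
    have : v'' = 0 := by
      funext j
      have hj : j = κ (κ.symm j) := (κ.apply_symm_apply j).symm
      rw [hj]
      rcases κ.symm j with y | i
      · exact congrFun hazero y
      · exact congrFun hczero i
    rw [hv''] at this
    exact sub_eq_zero.mp this
  -- surjectivity
  have hsurj : Function.Surjective (fun v : E → ℤ => Pz *ᵥ v) := by
    intro f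
    set a : {x : X // x ≠ x0} → ℤ := fun y => ∑ e, Bz (y : X) e * f e with ha
    set g : E → ℤ := f - R *ᵥ a with hg
    have hgker : ∀ x : {x : X // x ≠ x0}, ∑ e, Bz (x : X) e * g e = 0 := by
      intro x
      have h2 : ∑ e, Bz (x : X) e * g e
          = ∑ e, Bz (x : X) e * f e - ∑ e, Bz (x : X) e * (R *ᵥ a) e := by
        rw [← Finset.sum_sub_distrib]
        exact Finset.sum_congr rfl (fun e _ => by simp [hg, mul_sub])
      rw [h2, hrowR]
      simp [ha]
    have hgfull := hfull g hgker
    have hgreal : (B *ᵥ fun e => ((g e : ℤ) : ℝ)) = 0 := by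
      ext x
      show ∑ e, B x e * ((g e : ℤ) : ℝ) = 0
      have : ∑ e, B x e * ((g e : ℤ) : ℝ) = ((∑ e, Bz x e * g e : ℤ) : ℝ) := by
        push_cast
        exact Finset.sum_congr rfl (fun e _ => by rw [hBcast])
      rw [this, hgfull x, Int.cast_zero]
    obtain ⟨c, hc, -⟩ := hbasis g hgreal
    refine ⟨fun j => Sum.elim a c (κ.symm j), ?_⟩
    simp only
    rw [hPmul]
    have h3 : (fun y => Sum.elim a c (κ.symm (κ (Sum.inl y)))) = a := by
      funext y; simp
    have h4 : (fun i => Sum.elim a c (κ.symm (κ (Sum.inr i)))) = c := by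
      funext i; simp
    rw [h3, h4]
    have h5 : D *ᵥ c = g := by
      ext e
      show ∑ i, D e i * c i = g e
      exact (hc e).symm
    rw [h5, hg]
    ring
  -- Pz is invertible over ℤ
  have hPzunit : IsUnit Pz.det := by
    have hbij : Function.Bijective (Matrix.toLinAlgEquiv' Pz) := by
      constructor
      · intro v v' hvv
        apply hinj
        simpa [Matrix.toLinAlgEquiv'_apply] using hvv
      · intro f
        obtain ⟨v, hv⟩ := hsurj f
        exact ⟨v, by simpa [Matrix.toLinAlgEquiv'_apply] using hv⟩
    have h1 : IsUnit (Matrix.toLinAlgEquiv' Pz : Module.End ℤ (E → ℤ)) :=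
      (Module.End.isUnit_iff _).mpr hbij
    have h2 : IsUnit Pz := by
      have := h1.map (Matrix.toLinAlgEquiv' (R := ℤ) (n := E)).symm.toRingEquiv.toRingHom
      simpa using this
    exact (Matrix.isUnit_iff_isUnit_det Pz).mp h2
  have hPzdet : Pz.det * Pz.det = 1 := by
    rcases Int.isUnit_iff.mp hPzunit with h | h <;> rw [h] <;> norm_num
  -- real side
  set U : Matrix E E ℝ := Pz.map (fun n : ℤ => (n : ℝ)) with hU
  have hdetU : U.det = ((Pz.det : ℤ) : ℝ) := by
    rw [hU]
    have h := RingHom.map_det (Int.castRingHom ℝ) Pz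
    rw [RingHom.mapMatrix_apply] at h
    exact h.symm
  have hdetU2 : U.det * U.det = 1 := by
    rw [hdetU, ← Int.cast_mul, hPzdet, Int.cast_one]
  have hUunit : IsUnit U.det := IsUnit.of_mul_eq_one _ hdetU2
  set Bh : Matrix {x : X // x ≠ x0} E ℝ :=
    B.submatrix (fun i : {x : X // x ≠ x0} => (i : X)) id with hBh
  set G : Matrix E E ℝ := Matrix.diagonal C with hG
  set Gi : Matrix E E ℝ := Matrix.diagonal (fun e => (C e)⁻¹) with hGi
  have hGiG : Gi * G = 1 := by
    rw [hGi, hG, Matrix.diagonal_mul_diagonal]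
    have h1 : (fun e => (C e)⁻¹ * C e) = fun _ => (1 : ℝ) :=
      funext fun e => inv_mul_cancel₀ (hC e).ne'
    rw [h1, Matrix.diagonal_one]
  set p : {x : X // x ≠ x0} → E := fun x => κ (Sum.inl x) with hp
  set q : Fin r → E := fun i => κ (Sum.inr i) with hq
  set J : Matrix {x : X // x ≠ x0} E ℝ := (1 : Matrix E E ℝ).submatrix p id with hJ
  have hBhU : Bh * U = J := by
    ext x j
    rw [Matrix.mul_apply]
    have hJval : J x j = if κ (Sum.inl x) = j then 1 else 0 := by
      rw [hJ, Matrix.submatrix_apply, Matrix.one_apply, hp]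
      rfl
    rcases hj : κ.symm j with y | i
    · have h1 : ∑ e, Bh x e * U e j = ((∑ e, Bz (x : X) e * R e y : ℤ) : ℝ) := by
        push_cast
        refine Finset.sum_congr rfl (fun e _ => ?_)
        have hUej : U e j = ((R e y : ℤ) : ℝ) := by
          rw [hU, Matrix.map_apply, hPz, Matrix.of_apply, hj, Sum.elim_inl]
        rw [hUej, hBh, Matrix.submatrix_apply, id, ← hBcast]
      rw [h1, hBR, hJval]
      have hiff : (κ (Sum.inl x) = j) ↔ (x = y) := by
        constructor
        · intro h
          have h2 := congrArg κ.symm h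
          rw [Equiv.symm_apply_apply, hj] at h2
          exact Sum.inl_injective h2
        · intro h
          rw [h, ← hj, Equiv.apply_symm_apply]
      simp only [hiff]
      split_ifs <;> simp
    · have h1 : ∑ e, Bh x e * U e j = ((∑ e, Bz (x : X) e * D e i : ℤ) : ℝ) := by
        push_cast
        refine Finset.sum_congr rfl (fun e _ => ?_)
        have hUej : U e j = ((D e i : ℤ) : ℝ) := by
          rw [hU, Matrix.map_apply, hPz, Matrix.of_apply, hj, Sum.elim_inr]
        rw [hUej, hBh, Matrix.submatrix_apply, id, ← hBcast]
      rw [h1, hBzD, hJval]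
      have hne : ¬ (κ (Sum.inl x) = j) := by
        intro h
        have h2 := congrArg κ.symm h
        rw [Equiv.symm_apply_apply, hj] at h2
        exact Sum.inl_ne_inr h2
      rw [if_neg hne, Int.cast_zero]
  -- U is invertible
  have hUUi : U * U⁻¹ = 1 := Matrix.mul_nonsing_inv U hUunit
  have hUiU : U⁻¹ * U = 1 := Matrix.nonsing_inv_mul U hUunit
  have hBhJ : Bh = J * U⁻¹ := by rw [← hBhU, Matrix.mul_assoc, hUUi, Matrix.mul_one]
  set Nm : Matrix E E ℝ := Uᵀ * Gi * U with hNm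
  have hNmdet : Nm.det = ∏ e, (C e)⁻¹ := by
    rw [hNm, Matrix.det_mul, Matrix.det_mul, Matrix.det_transpose, hGi, Matrix.det_diagonal]
    calc U.det * (∏ e, (C e)⁻¹) * U.det = (U.det * U.det) * ∏ e, (C e)⁻¹ := by ring
      _ = ∏ e, (C e)⁻¹ := by rw [hdetU2, one_mul]
  have hprodinv : (∏ e, (C e)⁻¹) ≠ 0 := by
    rw [Finset.prod_ne_zero_iff]
    exact fun e _ => inv_ne_zero (hC e).ne'
  have hNmunit : IsUnit Nm.det := by
    rw [hNmdet]; exact isUnit_iff_ne_zero.mpr hprodinv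
  have hNminv : Nm⁻¹ = U⁻¹ * G * (U⁻¹)ᵀ := by
    apply Matrix.inv_eq_right_inv
    have e1 : (Uᵀ * Gi * U) * (U⁻¹ * G * (U⁻¹)ᵀ) = Uᵀ * Gi * (U * U⁻¹) * (G * (U⁻¹)ᵀ) := by
      simp only [Matrix.mul_assoc]
    rw [hNm, e1, hUUi, Matrix.mul_one]
    have e2 : Uᵀ * Gi * (G * (U⁻¹)ᵀ) = Uᵀ * (Gi * G) * (U⁻¹)ᵀ := by
      simp only [Matrix.mul_assoc]
    rw [e2, hGiG, Matrix.mul_one, ← Matrix.transpose_mul, hUiU, Matrix.transpose_one]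
  -- Jacobi setup
  set N' : Matrix ({x : X // x ≠ x0} ⊕ Fin r) ({x : X // x ≠ x0} ⊕ Fin r) ℝ :=
    Nm.submatrix κ κ with hN'
  set H' : Matrix ({x : X // x ≠ x0} ⊕ Fin r) ({x : X // x ≠ x0} ⊕ Fin r) ℝ :=
    Nm⁻¹.submatrix κ κ with hH'
  have hNH : N' * H' = 1 := by
    rw [hN', hH', Matrix.submatrix_mul_equiv, Matrix.mul_nonsing_inv Nm hNmunit,
      Matrix.submatrix_one_equiv]
  have hjac := aux_jacobi N' H' hNH
  have hN'det : N'.det = ∏ e, (C e)⁻¹ := by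
    rw [hN', Matrix.det_submatrix_equiv_self, hNmdet]
  -- block identifications
  have hH11 : H'.toBlocks₁₁ = Nm⁻¹.submatrix p p := by
    ext x y
    simp [hH', Matrix.toBlocks₁₁, hp]
  have hUq : U.submatrix id q = D.map (fun n : ℤ => (n : ℝ)) := by
    ext e i
    rw [Matrix.submatrix_apply, hU, Matrix.map_apply, hPz, Matrix.of_apply, hq]
    simp
  have hN22 : N'.toBlocks₂₂ =
      (D.map (fun n : ℤ => (n : ℝ))).transpose * Gi * D.map (fun n : ℤ => (n : ℝ)) := by
    rw [← hUq, Matrix.transpose_submatrix]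
    rw [aux_submatrix_mul Uᵀ Gi q]
    have h5 := Matrix.submatrix_mul_equiv (Uᵀ * Gi) U q (Equiv.refl E) q
    simp only [Equiv.coe_refl] at h5
    rw [h5]
    ext i i'
    simp [hN', Matrix.toBlocks₂₂, hNm, hq]
  -- identification of the Laplacian block
  have hLhat : L.submatrix (fun i : {x : X // x ≠ x0} => (i : X))
      (fun j : {x : X // x ≠ x0} => (j : X)) = Nm⁻¹.submatrix p p := by
    have h1 : L.submatrix (fun i : {x : X // x ≠ x0} => (i : X))
        (fun j : {x : X // x ≠ x0} => (j : X)) = Bh * G * Bhᵀ := by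
      rw [hL, hBh]
      ext x y
      simp [Matrix.mul_apply]
    rw [h1, hBhJ, Matrix.transpose_mul]
    have e3 : J * U⁻¹ * G * ((U⁻¹)ᵀ * Jᵀ) = J * (U⁻¹ * G * (U⁻¹)ᵀ) * Jᵀ := by
      simp only [Matrix.mul_assoc]
    rw [e3, ← hNminv]
    have hJ1 : J * Nm⁻¹ = Nm⁻¹.submatrix p id := by
      rw [hJ, aux_submatrix_mul, Matrix.one_mul]
    have hJT : Jᵀ = (1 : Matrix E E ℝ).submatrix id p := by
      rw [hJ, Matrix.transpose_submatrix, Matrix.transpose_one]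
    rw [hJ1, hJT, aux_mul_submatrix, Matrix.mul_one, Matrix.submatrix_submatrix]
    rfl
  -- final assembly
  rw [hLhat, ← hH11, ← hN22, ← hjac, hN'det]
  rw [mul_assoc, ← Finset.prod_mul_distrib]
  have hone : ∀ e ∈ Finset.univ, (C e)⁻¹ * C e = 1 :=
    fun e _ => inv_mul_cancel₀ (hC e).ne'
  rw [Finset.prod_congr rfl hone, Finset.prod_const_one, mul_one]
end
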